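/- arXiv:2603.05221 — 3 statements merged into one kernel-verified Lean document; each statement's English description precedes it below -/
import Mathlib

section
/- Let X ⊂ ℤ^k be a finite set, let s be an element of the integer cone of X (i.e., s is a finite nonnegative-integer combination of elements of X), and let M = max over x ∈ X of the infinity norm of x. Then there exists a subset Y ⊆ X such that s belongs to the integer cone of Y and |Y| ≤ 2·k·log₂(4·k·M). -/
/-- `s` lies in the integer cone of the finite set `X ⊂ ℤ^k`:
it is a nonnegative-integer combination of elements of `X`. -/
def inIntegerCone {k : ℕ} (X : Finset (Fin k → ℤ)) (s : Fin k → ℤ) : Prop :=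
  ∃ c : (Fin k → ℤ) → ℕ, s = ∑ x ∈ X, (c x : ℤ) • x


lemma bern_step (m n : ℕ) (h : 2*m ≤ n+1) : ((n+1:ℝ))^m ≤ 2 * (n:ℝ)^m := by
  have hn1 : (0:ℝ) < (n:ℝ)+1 := by positivity
  have ha : (-2:ℝ) ≤ -(1/((n:ℝ)+1)) := by
    rw [neg_le_neg_iff]
    rw [div_le_iff₀ hn1]; nlinarith
  have hb := one_add_mul_le_pow ha m
  have h2 : (1:ℝ)/2 ≤ (1 - 1/((n:ℝ)+1))^m := by
    have : (m:ℝ)/((n:ℝ)+1) ≤ 1/2 := by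
      rw [div_le_div_iff₀ hn1 (by norm_num)]
      have : (2*m:ℝ) ≤ (n:ℝ)+1 := by exact_mod_cast h
      linarith
    calc (1:ℝ)/2 ≤ 1 - (m:ℝ)/((n:ℝ)+1) := by linarith
    _ ≤ (1 + m * (-(1/((n:ℝ)+1)))) := le_of_eq (by ring)
    _ ≤ _ := by rw [← sub_eq_add_neg] at hb; exact hb
  have key : ((n:ℝ)+1)^m * (1/2) ≤ ((n:ℝ)+1)^m * (1 - 1/((n:ℝ)+1))^m :=
    mul_le_mul_of_nonneg_left h2 (by positivity)
  have heq : ((n:ℝ)+1) * (1 - 1/((n:ℝ)+1)) = n := by field_simp; ring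
  rw [← mul_pow, heq] at key
  linarith [key]

lemma lemA (k : ℕ) (hk : 1 ≤ k) : ∀ n : ℕ, 8*k^2 ≤ n → (n:ℝ)^(2*k) < 2^n := by
  intro n hn
  induction n, hn using Nat.le_induction with
  | base =>
      -- (8k²)^(2k) < 2^(8k²) in ℕ
      have hnat : (8*k^2)^(2*k) < 2^(8*k^2) := by
        rcases eq_or_lt_of_le hk with h1 | h2
        · subst h1; decide
        · have hk2 : 2 ≤ k := h2
          have h1 : k < 2^k := Nat.lt_two_pow_self
          have h2' : k^2 < 2^(2*k) := by
            calc k^2 < (2^k)^2 := Nat.pow_lt_pow_left h1 (by norm_num)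
            _ = 2^(2*k) := by rw [← pow_mul, mul_comm]
          have h3 : 8*k^2 < 2^(2*k+3) := by
            have : 2^(2*k+3) = 8 * 2^(2*k) := by ring
            omega
          calc (8*k^2)^(2*k) < (2^(2*k+3))^(2*k) :=
                Nat.pow_lt_pow_left h3 (by positivity)
          _ = 2^((2*k+3)*(2*k)) := by rw [← pow_mul]
          _ ≤ 2^(8*k^2) := Nat.pow_le_pow_right (by norm_num) (by nlinarith)
      calc ((8*k^2 : ℕ):ℝ)^(2*k) = (((8*k^2)^(2*k) : ℕ) : ℝ) := by push_cast; ring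
      _ < ((2^(8*k^2) : ℕ) : ℝ) := by exact_mod_cast hnat
      _ = 2^(8*k^2) := by push_cast; ring
  | succ n hn' ih =>
      have h4k : 2*(2*k) ≤ n+1 := by nlinarith
      have hb := bern_step (2*k) n h4k
      have : ((n:ℝ)+1)^(2*k) ≤ 2*(n:ℝ)^(2*k) := hb
      calc ((n+1:ℕ):ℝ)^(2*k) = ((n:ℝ)+1)^(2*k) := by push_cast; ring
      _ ≤ 2*(n:ℝ)^(2*k) := hb
      _ < 2*2^n := by linarith
      _ = 2^(n+1) := by ring

lemma lemB (k M n : ℕ) (hk : 1 ≤ k) (hM : 1 ≤ M)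
    (h : 2^n ≤ (2*n*M+1)^k) : (n:ℝ) ≤ 2*k*Real.logb 2 (4*k*M) := by
  by_contra hlt
  push_neg at hlt
  have hkM : (0:ℝ) < 4*(k:ℝ)*M := by positivity
  -- 2^n > (4kM)^(2k) as reals
  have h1 : ((4*k*M : ℕ):ℝ)^(2*k) < 2^n := by
    have e1 : ((2:ℝ)) ^ ((2*(k:ℝ)*Real.logb 2 (4*k*M))) = ((4*(k:ℝ)*M)) ^ (2*k) := by
      rw [show 2*(k:ℝ)*Real.logb 2 (4*k*M) = Real.logb 2 (4*(k:ℝ)*M) * ((2*k : ℕ):ℝ) by push_cast; ring]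
      rw [Real.rpow_mul (by norm_num : (0:ℝ) ≤ 2), Real.rpow_logb (by norm_num) (by norm_num) hkM,
        Real.rpow_natCast]
    have lt1 : ((2:ℝ)) ^ ((2*(k:ℝ)*Real.logb 2 (4*k*M))) < (2:ℝ) ^ ((n:ℝ)) :=
      Real.rpow_lt_rpow_of_exponent_lt (by norm_num) hlt
    rw [e1, Real.rpow_natCast] at lt1
    calc ((4*k*M : ℕ):ℝ)^(2*k) = (4*(k:ℝ)*M)^(2*k) := by push_cast; ring
    _ < (2:ℝ)^(n:ℕ) := lt1
  -- cast to ℕ: (4kM)^(2k) < 2^n ≤ (2nM+1)^k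
  have h2 : (4*k*M)^(2*k) < (2*n*M+1)^k := by
    have hc : ((4*k*M : ℕ):ℝ)^(2*k) < (((2*n*M+1)^k : ℕ):ℝ) := by
      calc ((4*k*M : ℕ):ℝ)^(2*k) < 2^n := h1
      _ = ((2^n : ℕ) : ℝ) := by push_cast; ring
      _ ≤ _ := by exact_mod_cast h
    have : (((4*k*M)^(2*k) : ℕ):ℝ) < (((2*n*M+1)^k : ℕ):ℝ) := by push_cast at hc ⊢; linarith
    exact_mod_cast this
  -- deduce n ≥ 8k²M
  have h3 : 16*k^2*M^2 < 2*n*M+1 := by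
    by_contra hle
    push_neg at hle
    have : (2*n*M+1)^k ≤ (16*k^2*M^2)^k := Nat.pow_le_pow_left hle k
    have e : (16*k^2*M^2)^k = (4*k*M)^(2*k) := by
      rw [pow_mul]; congr 1; ring
    omega
  have hk2 : 1 ≤ k^2 := Nat.one_le_pow _ _ hk
  have hn8 : 8*k^2*M ≤ n := by nlinarith
  -- then 2nM+1 ≤ n^2, so 2^n ≤ n^(2k), contradicting lemA
  have h2M : 2*M < n := by nlinarith
  have hsq : 2*n*M+1 ≤ n^2 := by nlinarith [h2M, Nat.one_le_two_pow (n := 0)]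
  have h4 : 2^n ≤ n^(2*k) := by
    calc 2^n ≤ (2*n*M+1)^k := h
    _ ≤ (n^2)^k := Nat.pow_le_pow_left hsq k
    _ = n^(2*k) := by rw [← pow_mul]
  have h5 : (n:ℝ)^(2*k) < 2^n := lemA k hk n (by nlinarith)
  have h6 : ((2:ℝ))^n ≤ (n:ℝ)^(2*k) := by exact_mod_cast h4
  linarith


lemma lemC {k : ℕ} (X : Finset (Fin k → ℤ)) (s : Fin k → ℤ) (M : ℕ)
    (hMmax : ∀ x ∈ X, ∀ i, |x i| ≤ (M : ℤ))
    (hs : inIntegerCone X s) :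
    ∃ Y ⊆ X, inIntegerCone Y s ∧ 2 ^ Y.card ≤ (2 * Y.card * M + 1) ^ k := by
  classical
  have hex : ∃ n, ∃ Y ⊆ X, Y.card ≤ n ∧ inIntegerCone Y s :=
    ⟨X.card, X, Finset.Subset.refl X, le_refl _, hs⟩
  set n₀ := Nat.find hex with hn₀
  obtain ⟨Y, hYX, hYcard, hYcone⟩ := Nat.find_spec hex
  have hmin : ∀ m, m < n₀ → ¬ (∃ Y ⊆ X, Y.card ≤ m ∧ inIntegerCone Y s) :=
    fun m hm => Nat.find_min hex hm
  have hcardeq : Y.card = n₀ := by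
    by_contra hne
    exact hmin Y.card (lt_of_le_of_ne hYcard hne) ⟨Y, hYX, le_refl _, hYcone⟩
  obtain ⟨c, hc⟩ := hYcone
  -- all coefficients on Y are nonzero
  have hpos : ∀ y ∈ Y, c y ≠ 0 := by
    intro y hy
    set Z := Y.filter (fun y => c y ≠ 0) with hZdef
    have hZY : Z ⊆ Y := Finset.filter_subset _ _
    have hZs : s = ∑ x ∈ Z, (c x : ℤ) • x := by
      rw [hc]
      refine (Finset.sum_subset hZY ?_).symm
      intro x hx hnx
      have : c x = 0 := by
        by_contra hcx
        exact hnx (Finset.mem_filter.mpr ⟨hx, hcx⟩)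
      simp [this]
    have hZeq : Z = Y := by
      apply Finset.eq_of_subset_of_card_le hZY
      rw [hcardeq]
      by_contra hlt
      push_neg at hlt
      exact hmin Z.card hlt ⟨Z, hZY.trans hYX, le_refl _, c, hZs⟩
    intro hcy
    have : y ∈ Z := hZeq ▸ hy
    exact (Finset.mem_filter.mp this).2 hcy
  refine ⟨Y, hYX, ⟨c, hc⟩, ?_⟩
  by_contra hcon
  push_neg at hcon
  -- reduction step as a general claim
  have red : ∀ A B : Finset (Fin k → ℤ), A ⊆ Y → B ⊆ Y → Disjoint A B →
      A.Nonempty → (∑ x ∈ A, x) = (∑ x ∈ B, x) → False := by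
    intro A B hA hB hdisj hAne hsum
    obtain ⟨x₀, hx₀A, hmin0⟩ := Finset.exists_min_image A c hAne
    set m := c x₀ with hm
    set c' : (Fin k → ℤ) → ℕ :=
      fun x => if x ∈ A then c x - m else if x ∈ B then c x + m else c x with hc'
    have hAB : ∀ x ∈ A, x ∉ B := fun x hx => Finset.disjoint_left.mp hdisj hx
    have hterm : ∀ x ∈ Y, (c' x : ℤ) • x = (c x : ℤ) • x +
        ((if x ∈ A then -(m:ℤ) else if x ∈ B then (m:ℤ) else 0) • x) := by
      intro x hx
      by_cases hxA : x ∈ A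
      · have hle : m ≤ c x := hmin0 x hxA
        simp only [hc', if_pos hxA]
        rw [Nat.cast_sub hle, sub_smul, neg_smul]
        ring_nf
      · by_cases hxB : x ∈ B
        · simp only [hc', if_neg hxA, if_pos hxB]
          push_cast
          rw [add_smul]
        · simp only [hc', if_neg hxA, if_neg hxB, zero_smul, add_zero]
    have hdelta : ∑ x ∈ Y, ((if x ∈ A then -(m:ℤ) else if x ∈ B then (m:ℤ) else 0) • x) = 0 := by
      rw [← Finset.sum_subset (Finset.union_subset hA hB)
        (by intro x hx hnx
            have hxA : x ∉ A := fun h => hnx (Finset.mem_union_left _ h)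
            have hxB : x ∉ B := fun h => hnx (Finset.mem_union_right _ h)
            simp [hxA, hxB])]
      rw [Finset.sum_union hdisj]
      have e1 : ∑ x ∈ A, ((if x ∈ A then -(m:ℤ) else if x ∈ B then (m:ℤ) else 0) • x)
          = -(m:ℤ) • ∑ x ∈ A, x := by
        rw [Finset.smul_sum]
        exact Finset.sum_congr rfl (fun x hx => by rw [if_pos hx])
      have e2 : ∑ x ∈ B, ((if x ∈ A then -(m:ℤ) else if x ∈ B then (m:ℤ) else 0) • x)
          = (m:ℤ) • ∑ x ∈ B, x := by
        rw [Finset.smul_sum]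
        refine Finset.sum_congr rfl (fun x hx => ?_)
        rw [if_neg (fun h => hAB x h hx), if_pos hx]
      rw [e1, e2, hsum, neg_smul]
      ring_nf
    have hkey : s = ∑ x ∈ Y, (c' x : ℤ) • x := by
      rw [Finset.sum_congr rfl hterm, Finset.sum_add_distrib, hdelta, add_zero, hc]
    have hc'x₀ : c' x₀ = 0 := by simp [hc', if_pos hx₀A, hm]
    have hx₀Y : x₀ ∈ Y := hA hx₀A
    have hkey2 : s = ∑ x ∈ Y.erase x₀, (c' x : ℤ) • x := by
      rw [hkey]
      exact (Finset.sum_erase _ (by simp [hc'x₀])).symm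
    have hcardlt : (Y.erase x₀).card < n₀ := by
      rw [Finset.card_erase_of_mem hx₀Y, hcardeq]
      have : 1 ≤ n₀ := by
        rw [← hcardeq]
        exact Finset.card_pos.mpr ⟨x₀, hx₀Y⟩
      omega
    exact hmin _ hcardlt ⟨Y.erase x₀, (Finset.erase_subset _ _).trans hYX, le_refl _, c', hkey2⟩
  -- pigeonhole
  set Box : Finset (Fin k → ℤ) :=
    Fintype.piFinset (fun _ => Finset.Icc (-(Y.card * M : ℤ)) (Y.card * M)) with hBoxdef
  have hBoxcard : Box.card = (2 * Y.card * M + 1) ^ k := by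
    rw [hBoxdef, Fintype.card_piFinset]
    have hgen : ∀ N : ℕ, (Finset.Icc (-(N:ℤ)) (N:ℤ)).card = 2*N+1 := by
      intro N; rw [Int.card_Icc]; omega
    have : (Finset.Icc (-(Y.card * M : ℤ)) (Y.card * M)).card = 2 * Y.card * M + 1 := by
      rw [show (-(Y.card * M : ℤ)) = -(((Y.card * M : ℕ)):ℤ) by push_cast; ring,
        show ((Y.card : ℤ) * M) = (((Y.card * M : ℕ)):ℤ) by push_cast; ring, hgen]
      ring
    simp [this]
  have hmapsto : ∀ T ∈ Y.powerset, (∑ x ∈ T, x) ∈ Box := by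
    intro T hT
    rw [Finset.mem_powerset] at hT
    rw [hBoxdef, Fintype.mem_piFinset]
    intro i
    rw [Finset.mem_Icc]
    have habs : |(∑ x ∈ T, x) i| ≤ (Y.card * M : ℤ) := by
      rw [Finset.sum_apply]
      calc |∑ x ∈ T, x i| ≤ ∑ x ∈ T, |x i| := Finset.abs_sum_le_sum_abs _ _
      _ ≤ ∑ _x ∈ T, (M:ℤ) := Finset.sum_le_sum (fun x hx => hMmax x (hYX (hT hx)) i)
      _ = T.card * M := by rw [Finset.sum_const]; simp [mul_comm]
      _ ≤ Y.card * M := by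
          have := Finset.card_le_card hT
          have : (T.card : ℤ) ≤ Y.card := by exact_mod_cast this
          nlinarith [Int.ofNat_nonneg M]
    exact abs_le.mp habs
  have hcardlt : Box.card < Y.powerset.card := by
    rw [hBoxcard, Finset.card_powerset]
    exact hcon
  obtain ⟨T1, hT1, T2, hT2, hne, heqsum⟩ :=
    Finset.exists_ne_map_eq_of_card_lt_of_maps_to hcardlt hmapsto
  rw [Finset.mem_powerset] at hT1 hT2
  have hsum : ∑ x ∈ T1 \ T2, x = ∑ x ∈ T2 \ T1, x := by
    have e1 := Finset.sum_inter_add_sum_sdiff T1 T2 (fun x => x)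
    have e2 := Finset.sum_inter_add_sum_sdiff T2 T1 (fun x => x)
    rw [Finset.inter_comm] at e2
    have : (∑ x ∈ T1 ∩ T2, x) + ∑ x ∈ T1 \ T2, x = (∑ x ∈ T1 ∩ T2, x) + ∑ x ∈ T2 \ T1, x := by
      rw [e1, e2, heqsum]
    exact add_left_cancel this
  have hdisj : Disjoint (T1 \ T2) (T2 \ T1) := disjoint_sdiff_sdiff
  rcases Finset.eq_empty_or_nonempty (T1 \ T2) with h12 | h12
  · have h21 : (T2 \ T1).Nonempty := by
      rcases Finset.eq_empty_or_nonempty (T2 \ T1) with h | h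
      · exact absurd (Finset.Subset.antisymm (Finset.sdiff_eq_empty_iff_subset.mp h12)
          (Finset.sdiff_eq_empty_iff_subset.mp h)) hne
      · exact h
    exact red (T2 \ T1) (T1 \ T2) ((Finset.sdiff_subset).trans hT2)
      ((Finset.sdiff_subset).trans hT1) hdisj.symm h21 hsum.symm
  · exact red (T1 \ T2) (T2 \ T1) ((Finset.sdiff_subset).trans hT1)
      ((Finset.sdiff_subset).trans hT2) hdisj h12 hsum


theorem stmt0 {k : ℕ} (X : Finset (Fin k → ℤ)) (s : Fin k → ℤ) (M : ℕ)
    (hM : 1 ≤ M)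
    (hMmax : ∀ x ∈ X, ∀ i, |x i| ≤ (M : ℤ))
    (hs : inIntegerCone X s) :
    ∃ Y ⊆ X, inIntegerCone Y s ∧
      (Y.card : ℝ) ≤ 2 * k * Real.logb 2 (4 * k * M) := by
  rcases Nat.eq_zero_or_pos k with hk0 | hk
  · refine ⟨∅, Finset.empty_subset X, ⟨fun _ => 0, ?_⟩, ?_⟩
    · subst hk0
      funext i
      exact i.elim0
    · simp [hk0]
  · obtain ⟨Y, hYX, hcone, hpow⟩ := lemC X s M hMmax hs
    exact ⟨Y, hYX, hcone, lemB k M Y.card hk hM hpow⟩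
end

section
/- Let s ∈ ℕ^d and t ∈ {0,1}^d with ∑_{j=1}^{d} s[j]·2^{j−1} = ∑_{j=1}^{d} t[j]·2^{j−1} < 2^d. Then s can be transformed into t by a finite sequence of moves, each replacing some s with s[j] ≥ 2 by s − 2e_j + e_{j+1} (for j < d). -/
def binVal {d : ℕ} (v : Fin d → ℕ) : ℕ :=
  ∑ j : Fin d, v j * 2 ^ (j : ℕ)

def carryStep {d : ℕ} (s s' : Fin d → ℕ) : Prop :=
  ∃ j : ℕ, ∃ hj : j + 1 < d, 2 ≤ s ⟨j, by omega⟩ ∧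
    s' = Function.update (Function.update s ⟨j, by omega⟩ (s ⟨j, by omega⟩ - 2))
          ⟨j + 1, hj⟩ (s ⟨j + 1, hj⟩ + 1)

lemma sum_update_weighted {d : ℕ} (v : Fin d → ℕ) (k : Fin d) (x : ℕ) (g : Fin d → ℕ) :
    (∑ j, Function.update v k x j * g j) + v k * g k
      = (∑ j, v j * g j) + x * g k := by
  classical
  have h : (fun j => Function.update v k x j * g j)
      = Function.update (fun j => v j * g j) k (x * g k) := by
    funext j
    by_cases hjk : j = k
    · subst hjk; simp
    · simp [Function.update_of_ne hjk]
  rw [h, Finset.sum_update_of_mem (Finset.mem_univ k), ← Finset.erase_eq,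
    ← Finset.add_sum_erase _ _ (Finset.mem_univ k)]
  ring

lemma binVal_succ {d : ℕ} (v : Fin (d + 1) → ℕ) :
    binVal v = v 0 + 2 * binVal (v ∘ Fin.succ) := by
  unfold binVal
  rw [Fin.sum_univ_succ, Finset.mul_sum]
  simp [Fin.val_succ, pow_succ]
  exact Finset.sum_congr rfl (fun x _ => by ring)

lemma binVal_unique : ∀ {d : ℕ} (u v : Fin d → ℕ), (∀ j, u j ≤ 1) → (∀ j, v j ≤ 1) →
    binVal u = binVal v → u = v := by
  intro d
  induction d with
  | zero => intro u v _ _ _; funext j; exact j.elim0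
  | succ d ih =>
    intro u v hu hv h
    rw [binVal_succ u, binVal_succ v] at h
    have h0 : u 0 = v 0 ∧ binVal (u ∘ Fin.succ) = binVal (v ∘ Fin.succ) := by
      have := hu 0; have := hv 0; omega
    have htail := ih (u ∘ Fin.succ) (v ∘ Fin.succ) (fun j => hu j.succ) (fun j => hv j.succ) h0.2
    funext j
    refine Fin.cases h0.1 (fun j => ?_) j
    exact congrFun htail j

lemma aux : ∀ n : ℕ, ∀ {d : ℕ} (s t : Fin d → ℕ), (∑ j, s j) ≤ n → (∀ j, t j ≤ 1) →
    binVal s = binVal t → binVal s < 2 ^ d → Relation.ReflTransGen carryStep s t := by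
  intro n
  induction n with
  | zero =>
    intro d s t hs ht hval _
    have hz : ∀ j, s j = 0 := by
      intro j
      have := Finset.single_le_sum (f := s) (fun _ _ => Nat.zero_le _) (Finset.mem_univ j)
      omega
    have := binVal_unique s t (fun j => by rw [hz j]; omega) ht hval
    rw [this]
  | succ n ih =>
    intro d s t hs ht hval hlt
    by_cases hb : ∀ j, s j ≤ 1
    · rw [binVal_unique s t hb ht hval]
    · push_neg at hb
      obtain ⟨i, hi⟩ := hb
      have hi2 : 2 ≤ s i := hi
      have hterm : s i * 2 ^ (i : ℕ) ≤ binVal s :=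
        Finset.single_le_sum (f := fun j => s j * 2 ^ (j : ℕ)) (fun _ _ => Nat.zero_le _)
          (Finset.mem_univ i)
      have hjd : (i : ℕ) + 1 < d := by
        by_contra hcon
        obtain ⟨m, rfl⟩ : ∃ m, d = m + 1 := ⟨d - 1, by have := i.isLt; omega⟩
        have hieq : (i : ℕ) = m := by have := i.isLt; omega
        have : 2 ^ (m + 1) ≤ s i * 2 ^ (i : ℕ) := by
          rw [hieq, pow_succ, mul_comm]
          exact Nat.mul_le_mul_right _ hi2
        omega
      set i' : Fin d := ⟨(i : ℕ) + 1, hjd⟩ with hi'def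
      set w : Fin d → ℕ := Function.update s i (s i - 2) with hwdef
      set s' : Fin d → ℕ := Function.update w i' (w i' + 1) with hs'def
      have hii' : i' ≠ i := by
        intro h
        have : (i : ℕ) + 1 = (i : ℕ) := congrArg Fin.val h
        omega
      have hwi' : w i' = s i' := Function.update_of_ne hii' _ _
      have hpow : (2 : ℕ) ^ ((i' : Fin d) : ℕ) = 2 * 2 ^ (i : ℕ) := by
        rw [hi'def]
        show (2 : ℕ) ^ ((i : ℕ) + 1) = 2 * 2 ^ (i : ℕ)
        rw [pow_succ]; ring
      have hstep : carryStep s s' := by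
        refine ⟨(i : ℕ), hjd, ?_, ?_⟩
        · exact hi2
        · simp only [hs'def, hwdef, hwi', Function.update_of_ne hii', Fin.eta, hi'def]
          rw [← hi'def, Function.update_of_ne hii']
      have hvi : (2:ℕ) ^ ((i:ℕ)) = 2 ^ ((i:ℕ)) := rfl
      clear_value i' w s'
      -- binVal preserved
      have h1 := sum_update_weighted s i (s i - 2) (fun j => 2 ^ (j : ℕ))
      rw [← hwdef] at h1
      have h2 := sum_update_weighted w i' (w i' + 1) (fun j => 2 ^ (j : ℕ))
      rw [← hs'def] at h2
      have e1 : binVal w + s i * 2 ^ (i : ℕ)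
          = binVal s + (s i - 2) * 2 ^ (i : ℕ) := h1
      have e2 : binVal s' + w i' * 2 ^ ((i' : Fin d) : ℕ)
          = binVal w + (w i' + 1) * 2 ^ ((i' : Fin d) : ℕ) := h2
      have hsub : (s i - 2) * 2 ^ (i : ℕ) = s i * 2 ^ (i : ℕ) - 2 * 2 ^ (i : ℕ) :=
        Nat.sub_mul _ _ _
      have hge : 2 * 2 ^ (i : ℕ) ≤ s i * 2 ^ (i : ℕ) := Nat.mul_le_mul_right _ hi2
      have hbw : binVal w + 2 * 2 ^ (i : ℕ) = binVal s := by omega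
      have hbs' : binVal s' = binVal s := by
        rw [hpow, add_mul, one_mul] at e2
        generalize w i' * (2 * 2 ^ (i : ℕ)) = b at e2
        omega
      -- sum decreases
      have h1' := sum_update_weighted s i (s i - 2) (fun _ => 1)
      have h2' := sum_update_weighted w i' (w i' + 1) (fun _ => 1)
      simp only [mul_one] at h1' h2'
      rw [← hwdef] at h1'
      rw [← hs'def] at h2'
      have hsum : (∑ j, s' j) + 1 = ∑ j, s j := by omega
      exact Relation.ReflTransGen.head hstep
        (ih s' t (by omega) ht (by rw [hbs', hval]) (by rw [hbs']; exact hlt))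

theorem stmt14 {d : ℕ} (s t : Fin d → ℕ)
    (ht : ∀ j, t j ≤ 1)
    (hval : binVal s = binVal t)
    (hlt : binVal s < 2 ^ d) :
    Relation.ReflTransGen carryStep s t :=
  aux (∑ j, s j) s t le_rfl ht hval hlt
end

section
/- Suppose a counter configuration evolves so that the quantity (x + x̄)·7^{z₁} never increases during a loop, the loop decreases z₁ by 1 per iteration while at most multiplying x + x̄ by 7, initially (x + x̄)·7^{z₁} ≤ z₂, and at termination z₁ = 0 and x = z₂ with x̄ = 0. Then initially (x + x̄)·7^{z₁} = z₂ and every loop iteration multiplied x + x̄ by exactly 7. -/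
theorem stmt19 (T z₂ : ℕ) (x xbar : ℕ → ℕ)
    (hstep : ∀ i < T, x (i + 1) + xbar (i + 1) ≤ 7 * (x i + xbar i))
    (hinit : (x 0 + xbar 0) * 7 ^ T ≤ z₂)
    (hfinx : x T = z₂) (hfinxbar : xbar T = 0) :
    (x 0 + xbar 0) * 7 ^ T = z₂ ∧
    ∀ i < T, x (i + 1) + xbar (i + 1) = 7 * (x i + xbar i) := by
  set f : ℕ → ℕ := fun i => (x i + xbar i) * 7 ^ (T - i) with hf
  have hstep' : ∀ i, i < T → f (i + 1) ≤ f i := by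
    intro i hi
    have hT : T - i = (T - (i + 1)) + 1 := by omega
    simp only [hf]
    calc (x (i + 1) + xbar (i + 1)) * 7 ^ (T - (i + 1))
        ≤ 7 * (x i + xbar i) * 7 ^ (T - (i + 1)) := by
          exact Nat.mul_le_mul_right _ (hstep i hi)
      _ = (x i + xbar i) * 7 ^ (T - i) := by rw [hT]; ring
  have hmono : ∀ j, j ≤ T → ∀ i, i ≤ j → f j ≤ f i := by
    intro j hj
    induction j with
    | zero => intro i hi; obtain rfl := Nat.le_zero.mp hi; exact le_rfl
    | succ n ih =>
      intro i hi
      rcases Nat.eq_or_lt_of_le hi with h | h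
      · rw [h]
      · exact le_trans (hstep' n (by omega)) (ih (by omega) i (by omega))
  have hfT : f T = z₂ := by simp [hf, hfinx, hfinxbar]
  have hf0 : f 0 = z₂ := by
    have := hmono T le_rfl 0 (Nat.zero_le _)
    have : z₂ ≤ f 0 := hfT ▸ this
    have h2 : f 0 ≤ z₂ := hinit
    omega
  have hall : ∀ i, i ≤ T → f i = z₂ := by
    intro i hi
    have h1 := hmono T le_rfl i hi
    have h2 := hmono i hi 0 (Nat.zero_le _)
    omega
  constructor
  · exact hf0
  · intro i hi
    have h1 := hall i (by omega)
    have h2 := hall (i + 1) (by omega)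
    have hT : T - i = (T - (i + 1)) + 1 := by omega
    have heq : (x (i + 1) + xbar (i + 1)) * 7 ^ (T - (i + 1)) =
        7 * (x i + xbar i) * 7 ^ (T - (i + 1)) := by
      have : (x i + xbar i) * 7 ^ (T - i) = 7 * (x i + xbar i) * 7 ^ (T - (i + 1)) := by
        rw [hT]; ring
      simp only [hf] at h1 h2
      omega
    have hpos : 0 < 7 ^ (T - (i + 1)) := Nat.pow_pos (by norm_num)
    exact Nat.eq_of_mul_eq_mul_right hpos heq
end
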